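/- Assume that every diagonal entry of B is nonzero and every row of B̃ is nonzero. Let L be the lower-triangular part of B (L_{ij} = B_{ij} if j ≤ i and L_{ij} = 0 otherwise) and R = B − L. Let sequences x₁^(k) ∈ ℝ^m and x₂^(k) ∈ ℝ^p satisfy, for all k ≥ 0: x₂^(k+1) = x₂^(k) + s(B̃)·d^(k) with d^(k)_i = (b_i − B_i·x₁^(k) − B̃_i·x₂^(k))/(m·‖B̃_i‖₁), and x₁^(k+1) = L⁻¹·(−R·x₁^(k) + b − B̃·x₂^(k+1)). If ‖I − B·L⁻¹‖₁ · ‖I − (1/m)·B̃·s(B̃)·N(B̃)⁻¹‖₁ < 1 (ℓ1 operator norms), then the sequence (x₁^(k), x₂^(k)) converges to a limit (x₁, x₂) in ℝ^m × ℝ^p, and this limit solves the system: B·x₁ + B̃·x₂ = b. -/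

import Mathlib

/-- The ℓ1-norm of a vector: sum of absolute values of its entries. -/
noncomputable def vecL1 {n : ℕ} (v : Fin n → ℝ) : ℝ := ∑ i, |v i|

/-- The ℓ1 operator norm of a matrix: the maximum absolute column sum. -/
noncomputable def matL1 {a c : ℕ} (M : Matrix (Fin a) (Fin c) ℝ) : ℝ :=
  ⨆ j, ∑ i, |M i j|


lemma vecL1_nonneg {n : ℕ} (v : Fin n → ℝ) : 0 ≤ vecL1 v :=
  Finset.sum_nonneg fun _ _ => abs_nonneg _

lemma abs_le_vecL1 {n : ℕ} (v : Fin n → ℝ) (i : Fin n) : |v i| ≤ vecL1 v :=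
  Finset.single_le_sum (fun j _ => abs_nonneg (v j)) (Finset.mem_univ i)

lemma colsum_le_matL1 {a c : ℕ} (M : Matrix (Fin a) (Fin c) ℝ) (j : Fin c) :
    ∑ i, |M i j| ≤ matL1 M :=
  le_ciSup (f := fun j => ∑ i, |M i j|) (Set.Finite.bddAbove (Set.finite_range _)) j

lemma matL1_nonneg {a c : ℕ} [Nonempty (Fin c)] (M : Matrix (Fin a) (Fin c) ℝ) :
    0 ≤ matL1 M := by
  obtain ⟨j⟩ := (inferInstance : Nonempty (Fin c))
  exact le_trans (Finset.sum_nonneg fun i _ => abs_nonneg _) (colsum_le_matL1 M j)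

lemma vecL1_mulVec_le {a c : ℕ} (M : Matrix (Fin a) (Fin c) ℝ) (v : Fin c → ℝ) :
    vecL1 (M.mulVec v) ≤ matL1 M * vecL1 v := by
  unfold vecL1
  calc ∑ i, |M.mulVec v i| ≤ ∑ i, ∑ j, |M i j * v j| := by
        refine Finset.sum_le_sum fun i _ => ?_
        simpa [Matrix.mulVec, dotProduct] using
          Finset.abs_sum_le_sum_abs (fun j => M i j * v j) Finset.univ
    _ = ∑ j, (∑ i, |M i j|) * |v j| := by
        rw [Finset.sum_comm]; simp [abs_mul, Finset.sum_mul]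
    _ ≤ ∑ j, matL1 M * |v j| := by
        refine Finset.sum_le_sum fun j _ => ?_
        exact mul_le_mul_of_nonneg_right (colsum_le_matL1 M j) (abs_nonneg _)
    _ = matL1 M * ∑ j, |v j| := by rw [Finset.mul_sum]

lemma vecL1_smul {n : ℕ} (c : ℝ) (v : Fin n → ℝ) : vecL1 (c • v) = |c| * vecL1 v := by
  unfold vecL1; simp [abs_mul, Finset.mul_sum]

/-- if `‖I − B L⁻¹‖₁ ‖I − (1/m) B̃ s N⁻¹‖₁ < 1`, then the generalized
Gauss–Seidel iterates converge to a limit `(y₁, y₂)`, and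
that limit solves `B y₁ + B̃ y₂ = b`. -/
theorem generalized_gauss_seidel_converges_to_solution
    (m p : ℕ) (hm : 0 < m) (hp : 0 < p)
    (B : Matrix (Fin m) (Fin m) ℝ) (Bt : Matrix (Fin m) (Fin p) ℝ) (b : Fin m → ℝ)
    (hDiag : ∀ i, B i i ≠ 0) (hRows : ∀ i, Bt i ≠ 0)
    (s : Matrix (Fin p) (Fin m) ℝ) (hs : ∀ j i, s j i = Real.sign (Bt i j))
    (N : Matrix (Fin m) (Fin m) ℝ)
    (hN : N = Matrix.diagonal (fun i => ∑ j, |Bt i j|))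
    (L : Matrix (Fin m) (Fin m) ℝ) (hL : ∀ i j, L i j = if (j : ℕ) ≤ (i : ℕ) then B i j else 0)
    (R : Matrix (Fin m) (Fin m) ℝ) (hR : R = B - L)
    (x₁ : ℕ → Fin m → ℝ) (x₂ : ℕ → Fin p → ℝ)
    (d : ℕ → Fin m → ℝ)
    (hd : ∀ k i, d k i = (b i - (B.mulVec (x₁ k)) i - (Bt.mulVec (x₂ k)) i) /
      ((m : ℝ) * ∑ j, |Bt i j|))
    (hx₂ : ∀ k, x₂ (k + 1) = x₂ k + s.mulVec (d k))
    (hx₁ : ∀ k, x₁ (k + 1) = L⁻¹.mulVec (-(R.mulVec (x₁ k)) + (b - Bt.mulVec (x₂ (k + 1)))))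
    (hq1 : matL1 (1 - B * L⁻¹) * matL1 (1 - (1 / (m : ℝ)) • (Bt * s * N⁻¹)) < 1) :
    ∃ y₁ : Fin m → ℝ, ∃ y₂ : Fin p → ℝ,
      Filter.Tendsto (fun k => (x₁ k, x₂ k)) Filter.atTop (nhds (y₁, y₂)) ∧
      B.mulVec y₁ + Bt.mulVec y₂ = b := by
  haveI : Nonempty (Fin m) := ⟨⟨0, hm⟩⟩
  haveI : Nonempty (Fin p) := ⟨⟨0, hp⟩⟩
  have hm' : (m : ℝ) ≠ 0 := Nat.cast_ne_zero.mpr hm.ne'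
  -- row sums are positive
  have hn : ∀ i, 0 < ∑ j, |Bt i j| := by
    intro i
    have hex : ∃ j, Bt i j ≠ 0 := by
      by_contra h; push_neg at h; exact hRows i (funext h)
    obtain ⟨j, hj⟩ := hex
    exact Finset.sum_pos' (fun j _ => abs_nonneg _) ⟨j, Finset.mem_univ j, abs_pos.mpr hj⟩
  -- L is invertible
  have hLtri : L.BlockTriangular OrderDual.toDual := by
    intro i j hij
    rw [hL]
    have : ¬ ((j : ℕ) ≤ (i : ℕ)) := by
      simp only [OrderDual.toDual_lt_toDual] at hij
      exact not_le.mpr hij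
    exact if_neg this
  have hLdet : IsUnit L.det := by
    rw [Matrix.det_of_lowerTriangular L hLtri]
    refine IsUnit.mk0 _ (Finset.prod_ne_zero_iff.mpr fun i _ => ?_)
    rw [hL]; simpa using hDiag i
  have hLinv : ∀ v : Fin m → ℝ, L⁻¹.mulVec (L.mulVec v) = v := by
    intro v
    rw [Matrix.mulVec_mulVec, Matrix.nonsing_inv_mul L hLdet, Matrix.one_mulVec]
  -- residual
  set r : ℕ → Fin m → ℝ := fun k => b - B.mulVec (x₁ k) - Bt.mulVec (x₂ k) with hrdef
  set M₁ : Matrix (Fin m) (Fin m) ℝ := 1 - B * L⁻¹ with hM₁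
  set M₂ : Matrix (Fin m) (Fin m) ℝ := 1 - (1 / (m : ℝ)) • (Bt * s * N⁻¹) with hM₂
  -- N⁻¹ explicit
  have hNinv : N⁻¹ = Matrix.diagonal (fun i => (∑ j, |Bt i j|)⁻¹) := by
    apply Matrix.inv_eq_right_inv
    rw [hN, Matrix.diagonal_mul_diagonal]
    have he : (fun i => (∑ j, |Bt i j|) * (∑ j, |Bt i j|)⁻¹) = fun _ : Fin m => (1 : ℝ) :=
      funext fun i => mul_inv_cancel₀ (hn i).ne'
    rw [he, Matrix.diagonal_one]
  have hd' : ∀ k, d k = (1 / (m : ℝ)) • (N⁻¹.mulVec (r k)) := by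
    intro k; funext i
    rw [hd]
    have : (N⁻¹.mulVec (r k)) i = (∑ j, |Bt i j|)⁻¹ * (r k i) := by
      rw [hNinv, Matrix.mulVec_diagonal]
    rw [Pi.smul_apply, this]
    simp only [Pi.smul_apply, this, smul_eq_mul, hrdef, Pi.sub_apply]
    have hne := (hn i).ne'
    field_simp
  have hhat : ∀ k, b - B.mulVec (x₁ k) - Bt.mulVec (x₂ (k + 1)) = M₂.mulVec (r k) := by
    intro k
    have e1 : Bt.mulVec (x₂ (k + 1))
        = Bt.mulVec (x₂ k) + (1 / (m : ℝ)) • (Bt * s * N⁻¹).mulVec (r k) := by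
      rw [hx₂ k, Matrix.mulVec_add, hd' k, Matrix.mulVec_smul, Matrix.mulVec_smul,
        Matrix.mulVec_mulVec, Matrix.mulVec_mulVec, Matrix.mul_assoc]
    have e2 : M₂.mulVec (r k) = r k - (1 / (m : ℝ)) • (Bt * s * N⁻¹).mulVec (r k) := by
      rw [hM₂, Matrix.sub_mulVec, Matrix.one_mulVec, Matrix.smul_mulVec]
    rw [e1, e2, hrdef]
    funext i; simp only [Pi.sub_apply, Pi.add_apply]; ring
  have hx₁' : ∀ k, x₁ (k + 1) = x₁ k + L⁻¹.mulVec (M₂.mulVec (r k)) := by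
    intro k
    rw [hx₁ k, hR]
    have e3 : -((B - L).mulVec (x₁ k)) + (b - Bt.mulVec (x₂ (k + 1)))
        = L.mulVec (x₁ k) + M₂.mulVec (r k) := by
      rw [← hhat k, Matrix.sub_mulVec]
      funext i
      simp only [Pi.add_apply, Pi.sub_apply, Pi.neg_apply]; ring
    rw [e3, Matrix.mulVec_add, hLinv, add_comm]
  have hrec : ∀ k, r (k + 1) = M₁.mulVec (M₂.mulVec (r k)) := by
    intro k
    have e3 : B.mulVec (x₁ (k + 1))
        = B.mulVec (x₁ k) + (B * L⁻¹).mulVec (M₂.mulVec (r k)) := by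
      rw [hx₁' k, Matrix.mulVec_add, Matrix.mulVec_mulVec]
    have e4 : M₁.mulVec (M₂.mulVec (r k))
        = M₂.mulVec (r k) - (B * L⁻¹).mulVec (M₂.mulVec (r k)) := by
      rw [hM₁, Matrix.sub_mulVec, Matrix.one_mulVec]
    have e5 : r (k + 1) = b - B.mulVec (x₁ (k + 1)) - Bt.mulVec (x₂ (k + 1)) := by
      rw [hrdef]
    rw [e5, e3, e4, ← hhat k]
    funext i; simp only [Pi.sub_apply, Pi.add_apply]; ring
  -- geometric decay of the residual
  set q₁ : ℝ := matL1 M₁ with hq₁def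
  set q₂ : ℝ := matL1 M₂ with hq₂def
  have hq₁0 : 0 ≤ q₁ := matL1_nonneg _
  have hq₂0 : 0 ≤ q₂ := matL1_nonneg _
  set q : ℝ := q₁ * q₂ with hqdef
  have hq0 : 0 ≤ q := mul_nonneg hq₁0 hq₂0
  have hqlt : q < 1 := hq1
  set C₀ : ℝ := vecL1 (r 0) with hC₀
  have hC₀0 : 0 ≤ C₀ := vecL1_nonneg _
  have hrbound : ∀ k, vecL1 (r k) ≤ q ^ k * C₀ := by
    intro k; induction k with
    | zero => simp [hC₀]
    | succ k ih =>
      calc vecL1 (r (k + 1)) = vecL1 (M₁.mulVec (M₂.mulVec (r k))) := by rw [hrec k]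
        _ ≤ q₁ * vecL1 (M₂.mulVec (r k)) := vecL1_mulVec_le _ _
        _ ≤ q₁ * (q₂ * vecL1 (r k)) :=
            mul_le_mul_of_nonneg_left (vecL1_mulVec_le _ _) hq₁0
        _ ≤ q₁ * (q₂ * (q ^ k * C₀)) := by
            exact mul_le_mul_of_nonneg_left
              (mul_le_mul_of_nonneg_left ih hq₂0) hq₁0
        _ = q ^ (k + 1) * C₀ := by rw [hqdef]; ring
  -- step bounds
  have hstep₂ : ∀ k, x₂ (k + 1) - x₂ k = (1 / (m : ℝ)) • (s * N⁻¹).mulVec (r k) := by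
    intro k
    rw [hx₂ k, hd' k, Matrix.mulVec_smul, Matrix.mulVec_mulVec]
    abel
  set C₂ : ℝ := (1 / (m : ℝ)) * matL1 (s * N⁻¹) * C₀ with hC₂
  have hd₂ : ∀ k i, |x₂ (k + 1) i - x₂ k i| ≤ C₂ * q ^ k := by
    intro k i
    have h1 : |x₂ (k + 1) i - x₂ k i| ≤ vecL1 (x₂ (k + 1) - x₂ k) := by
      simpa using abs_le_vecL1 (x₂ (k + 1) - x₂ k) i
    have h2 : vecL1 (x₂ (k + 1) - x₂ k)
        ≤ (1 / (m : ℝ)) * (matL1 (s * N⁻¹) * (q ^ k * C₀)) := by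
      rw [hstep₂ k, vecL1_smul]
      have habs : |1 / (m : ℝ)| = 1 / (m : ℝ) := by
        rw [abs_of_nonneg]; positivity
      rw [habs]
      refine mul_le_mul_of_nonneg_left ?_ (by positivity)
      exact (vecL1_mulVec_le _ _).trans
        (mul_le_mul_of_nonneg_left (hrbound k) (matL1_nonneg _))
    refine (h1.trans h2).trans (le_of_eq ?_)
    rw [hC₂]; ring
  set C₁ : ℝ := matL1 L⁻¹ * (q₂ * C₀) with hC₁
  have hd₁ : ∀ k i, |x₁ (k + 1) i - x₁ k i| ≤ C₁ * q ^ k := by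
    intro k i
    have h1 : |x₁ (k + 1) i - x₁ k i| ≤ vecL1 (x₁ (k + 1) - x₁ k) := by
      simpa using abs_le_vecL1 (x₁ (k + 1) - x₁ k) i
    have hstep : x₁ (k + 1) - x₁ k = L⁻¹.mulVec (M₂.mulVec (r k)) := by
      rw [hx₁' k]; abel
    have h2 : vecL1 (x₁ (k + 1) - x₁ k) ≤ matL1 L⁻¹ * (q₂ * (q ^ k * C₀)) := by
      rw [hstep]
      refine (vecL1_mulVec_le _ _).trans (mul_le_mul_of_nonneg_left ?_ (matL1_nonneg _))
      exact (vecL1_mulVec_le _ _).trans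
        (mul_le_mul_of_nonneg_left (hrbound k) hq₂0)
    refine (h1.trans h2).trans (le_of_eq ?_)
    rw [hC₁]; ring
  -- coordinatewise convergence
  have hc₁ : ∀ i, ∃ y : ℝ, Filter.Tendsto (fun k => x₁ k i) Filter.atTop (nhds y) := by
    intro i
    have : CauchySeq (fun k => x₁ k i) := by
      refine cauchySeq_of_le_geometric q C₁ hqlt fun n => ?_
      rw [Real.dist_eq, abs_sub_comm]
      exact hd₁ n i
    exact cauchySeq_tendsto_of_complete this
  have hc₂ : ∀ i, ∃ y : ℝ, Filter.Tendsto (fun k => x₂ k i) Filter.atTop (nhds y) := by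
    intro i
    have : CauchySeq (fun k => x₂ k i) := by
      refine cauchySeq_of_le_geometric q C₂ hqlt fun n => ?_
      rw [Real.dist_eq, abs_sub_comm]
      exact hd₂ n i
    exact cauchySeq_tendsto_of_complete this
  choose y₁ hy₁ using hc₁
  choose y₂ hy₂ using hc₂
  have h₁ : Filter.Tendsto x₁ Filter.atTop (nhds y₁) := tendsto_pi_nhds.mpr hy₁
  have h₂ : Filter.Tendsto x₂ Filter.atTop (nhds y₂) := tendsto_pi_nhds.mpr hy₂
  refine ⟨y₁, y₂, h₁.prodMk_nhds h₂, ?_⟩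
  -- the limit solves the system
  have hBcont : Continuous (fun v : Fin m → ℝ => B.mulVec v) := by
    refine continuous_pi fun i => ?_
    simp only [Matrix.mulVec, dotProduct]
    exact continuous_finset_sum _ fun j _ => continuous_const.mul (continuous_apply j)
  have hBtcont : Continuous (fun v : Fin p → ℝ => Bt.mulVec v) := by
    refine continuous_pi fun i => ?_
    simp only [Matrix.mulVec, dotProduct]
    exact continuous_finset_sum _ fun j _ => continuous_const.mul (continuous_apply j)
  have hrl : Filter.Tendsto r Filter.atTop (nhds (b - B.mulVec y₁ - Bt.mulVec y₂)) := by
    rw [hrdef]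
    exact (tendsto_const_nhds.sub ((hBcont.tendsto y₁).comp h₁)).sub
      ((hBtcont.tendsto y₂).comp h₂)
  have hr0 : Filter.Tendsto r Filter.atTop (nhds 0) := by
    rw [tendsto_pi_nhds]
    intro i
    have hg : Filter.Tendsto (fun k : ℕ => q ^ k * C₀) Filter.atTop (nhds 0) := by
      simpa using (tendsto_pow_atTop_nhds_zero_of_lt_one hq0 hqlt).mul_const C₀
    have hb : ∀ k, ‖r k i‖ ≤ q ^ k * C₀ := fun k =>
      (abs_le_vecL1 (r k) i).trans (hrbound k)
    simpa using squeeze_zero_norm hb hg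
  have hkey : b - B.mulVec y₁ - Bt.mulVec y₂ = 0 := tendsto_nhds_unique hrl hr0
  funext i
  have := congrFun hkey i
  simp only [Pi.sub_apply, Pi.zero_apply, Pi.add_apply] at this ⊢
  linarith
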